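/- L_p-Minkowski inequality for mixed chord integrals: if K and L are star bodies in R^n, 0 ≤ i < n, and p ≥ 1, then B_{-p,i}(K,L)^{n-i} ≥ B_i(K)^{n-i+p} · B_i(L)^{-p}, where B_{-p,i}(K,L) = (1/n)∫_{S^{n-1}} d(K,u)^{n-i+p} d(L,u)^{-p} dS(u). Equality holds if and only if K and L have similar chord. -/

import Mathlib

open MeasureTheory Metric Filter Set

noncomputable section

/-- A star body in `ℝⁿ`: a compact set, star-shaped about the origin, whose radial
function (recorded on the unit sphere) is positive and continuous. -/
structure StarBody (n : ℕ) where
  carrier : Set (EuclideanSpace ℝ (Fin n))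
  radial : sphere (0 : EuclideanSpace ℝ (Fin n)) 1 → ℝ
  radial_pos : ∀ u, 0 < radial u
  radial_continuous : Continuous radial
  isCompact : IsCompact carrier
  mem_iff : ∀ x, x ∈ carrier ↔ x = 0 ∨
    ∃ (u : sphere (0 : EuclideanSpace ℝ (Fin n)) 1) (c : ℝ),
      0 ≤ c ∧ c ≤ radial u ∧ x = c • (u : EuclideanSpace ℝ (Fin n))

/-- The half chord `d(K,u) = (ρ(K,u) + ρ(K,-u))/2` of a star body in direction `u`. -/
def StarBody.chord {n : ℕ} (K : StarBody n) (u : sphere (0 : EuclideanSpace ℝ (Fin n)) 1) : ℝ :=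
  (K.radial u + K.radial (-u)) / 2

/-- Spherical (surface-type) measure on the unit sphere of `ℝⁿ`. -/
def sphereMeasure (n : ℕ) : Measure (sphere (0 : EuclideanSpace ℝ (Fin n)) 1) :=
  (volume : Measure (EuclideanSpace ℝ (Fin n))).toSphere

/-- The chord integral `B_i(K) = (1/n) ∫_{S^{n-1}} d(K,u)^{n-i} dS(u)`. -/
def chordIntegral (n i : ℕ) (K : StarBody n) : ℝ :=
  (1 / (n : ℝ)) * ∫ u, K.chord u ^ ((n : ℝ) - i) ∂(sphereMeasure n)

/-- `K` and `L` have similar chord: `d(K,·) = λ d(L,·)` for some `λ > 0`. -/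
def SimilarChord {n : ℕ} (K L : StarBody n) : Prop :=
  ∃ lam : ℝ, 0 < lam ∧ ∀ u, K.chord u = lam * L.chord u

/-- The `L_p`-mixed chord integral
`B_{-p,i}(K,L) = (1/n) ∫_{S^{n-1}} d(K,u)^{n-i+p} d(L,u)^{-p} dS(u)`. -/
def lpMixedChordIntegral (n i : ℕ) (p : ℝ) (K L : StarBody n) : ℝ :=
  (1 / (n : ℝ)) * ∫ u, K.chord u ^ ((n : ℝ) - i + p) * L.chord u ^ (-p)
    ∂(sphereMeasure n)

open scoped Pointwise ENNReal NNReal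

lemma StarBody.chord_pos {n : ℕ} (K : StarBody n) (u) : 0 < K.chord u := by
  have h1 := K.radial_pos u; have h2 := K.radial_pos (-u)
  unfold StarBody.chord; linarith

lemma StarBody.chord_continuous {n : ℕ} (K : StarBody n) : Continuous K.chord := by
  unfold StarBody.chord
  exact ((K.radial_continuous).add (K.radial_continuous.comp continuous_neg)).div_const 2

instance sphereMeasure_finite (n : ℕ) : IsFiniteMeasure (sphereMeasure n) := by
  unfold sphereMeasure; infer_instance

lemma integrable_sphere {n : ℕ} {h : sphere (0 : EuclideanSpace ℝ (Fin n)) 1 → ℝ}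
    (hc : Continuous h) (μ : Measure (sphere (0 : EuclideanSpace ℝ (Fin n)) 1))
    [IsFiniteMeasure μ] : Integrable h μ :=
  hc.integrable_of_hasCompactSupport (HasCompactSupport.of_compactSpace h)

lemma sphereMeasure_univ_ne_zero {n : ℕ} (hn : n ≠ 0) : sphereMeasure n univ ≠ 0 := by
  haveI : Nonempty (Fin n) := ⟨⟨0, Nat.pos_of_ne_zero hn⟩⟩
  haveI : Nontrivial (EuclideanSpace ℝ (Fin n)) := inferInstance
  rw [sphereMeasure, Measure.toSphere_apply_univ, finrank_euclideanSpace_fin]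
  exact (ENNReal.mul_pos (by exact_mod_cast hn)
    (measure_ball_pos volume 0 one_pos).ne').ne'

lemma integral_sphere_pos {n : ℕ} (hn : n ≠ 0)
    {h : sphere (0 : EuclideanSpace ℝ (Fin n)) 1 → ℝ}
    (hc : Continuous h) (hpos : ∀ u, 0 < h u) :
    0 < ∫ u, h u ∂(sphereMeasure n) := by
  rw [integral_pos_iff_support_of_nonneg (fun u => (hpos u).le) (integrable_sphere hc _)]
  have hsup : Function.support h = univ :=
    eq_univ_of_forall fun u => (hpos u).ne'
  rw [hsup]
  exact pos_iff_ne_zero.mpr (sphereMeasure_univ_ne_zero hn)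

lemma sphereMeasure_isOpenPos (n : ℕ) : (sphereMeasure n).IsOpenPosMeasure := by
  constructor
  intro U hU hne
  obtain ⟨u, hu⟩ := hne
  have hn : n ≠ 0 := by
    rintro rfl
    have h1 : ‖(u : EuclideanSpace ℝ (Fin 0))‖ = 1 := mem_sphere_zero_iff_norm.mp u.2
    have h0 : (u : EuclideanSpace ℝ (Fin 0)) = 0 := Subsingleton.elim _ _
    rw [h0, norm_zero] at h1; exact one_ne_zero h1.symm
  obtain ⟨V, hVopen, hVU⟩ := isOpen_induced_iff.mp hU
  have hshell_open : IsOpen ((fun x : EuclideanSpace ℝ (Fin n) => ‖x‖) ⁻¹' Ioo (0:ℝ) 1) :=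
    isOpen_Ioo.preimage continuous_norm
  have hproj : ContinuousOn (fun x : EuclideanSpace ℝ (Fin n) => ‖x‖⁻¹ • x)
      ((fun x : EuclideanSpace ℝ (Fin n) => ‖x‖) ⁻¹' Ioo (0:ℝ) 1) := by
    refine ContinuousOn.smul (f := fun x : EuclideanSpace ℝ (Fin n) => ‖x‖⁻¹) ?_ continuousOn_id
    exact (continuous_norm.continuousOn).inv₀ fun x hx => ne_of_gt hx.1
  set T : Set (EuclideanSpace ℝ (Fin n)) :=
    ((fun x : EuclideanSpace ℝ (Fin n) => ‖x‖) ⁻¹' Ioo (0:ℝ) 1) ∩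
      (fun x : EuclideanSpace ℝ (Fin n) => ‖x‖⁻¹ • x) ⁻¹' V with hT
  have hTopen : IsOpen T := hproj.isOpen_inter_preimage hshell_open hVopen
  have hTne : T.Nonempty := by
    have hnorm : ‖(2:ℝ)⁻¹ • (u : EuclideanSpace ℝ (Fin n))‖ = 2⁻¹ := by
      rw [norm_smul, mem_sphere_zero_iff_norm.mp u.2]; norm_num
    refine ⟨(2:ℝ)⁻¹ • (u : EuclideanSpace ℝ (Fin n)), ?_, ?_⟩
    · simp only [mem_preimage, hnorm, mem_Ioo]; norm_num
    · simp only [mem_preimage, hnorm]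
      have h2 : ((2:ℝ)⁻¹)⁻¹ • ((2:ℝ)⁻¹ • (u : EuclideanSpace ℝ (Fin n))) =
          (u : EuclideanSpace ℝ (Fin n)) := by rw [smul_smul]; norm_num
      rw [h2]
      have : u ∈ Subtype.val ⁻¹' V := hVU.symm ▸ hu
      exact this
  have hsub : T ⊆ Ioo (0:ℝ) 1 • (Subtype.val '' U) := by
    rintro x ⟨hx1, hx2⟩
    have hxnorm : ‖x‖ ∈ Ioo (0:ℝ) 1 := hx1
    have hxs : ‖x‖⁻¹ • x ∈ sphere (0:EuclideanSpace ℝ (Fin n)) 1 := by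
      rw [mem_sphere_zero_iff_norm, norm_smul, norm_inv, norm_norm,
        inv_mul_cancel₀ (ne_of_gt hxnorm.1)]
    refine ⟨‖x‖, hxnorm, ‖x‖⁻¹ • x, ⟨⟨‖x‖⁻¹ • x, hxs⟩, ?_, rfl⟩, ?_⟩
    · show (⟨_, hxs⟩ : sphere (0:EuclideanSpace ℝ (Fin n)) 1) ∈ U
      rw [← hVU]; exact hx2
    · show ‖x‖ • (‖x‖⁻¹ • x) = x
      rw [smul_smul, mul_inv_cancel₀ (ne_of_gt hxnorm.1), one_smul]
  have hmeas : sphereMeasure n U = (n : ℝ≥0∞) * volume (Ioo (0:ℝ) 1 • (Subtype.val '' U)) := by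
    rw [sphereMeasure, Measure.toSphere_apply' _ hU.measurableSet, finrank_euclideanSpace_fin]
  rw [hmeas]
  exact ne_of_gt <| ENNReal.mul_pos (by exact_mod_cast hn)
    (ne_of_gt (lt_of_lt_of_le (hTopen.measure_pos volume hTne) (measure_mono hsub)))

lemma rpow_cancel_aux {c : ℝ} (hc : 0 < c) (α p : ℝ) : c ^ (α + p) * c ^ (-p) = c ^ α := by
  rw [← Real.rpow_add hc, add_neg_cancel_right]

lemma red_eq {c A G : ℝ} (α p : ℝ) (hc : 0 < c) (hA : 0 < A) (hG : 0 < G) :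
    (c * A) ^ (α + p) * (c * G) ^ (-p) = c ^ α * (A ^ (α + p) * G ^ (-p)) := by
  rw [Real.mul_rpow hc.le hA.le, Real.mul_rpow hc.le hG.le]
  calc c ^ (α+p) * A ^ (α+p) * (c ^ (-p) * G ^ (-p))
      = (c ^ (α+p) * c ^ (-p)) * (A ^ (α+p) * G ^ (-p)) := by ring
    _ = c ^ α * (A ^ (α+p) * G ^ (-p)) := by rw [rpow_cancel_aux hc]

lemma alg_eq {c lam G : ℝ} (α p : ℝ) (hc : 0 < c) (hlam : 0 < lam) (hG : 0 < G) :
    (c * (lam ^ (α+p) * G)) ^ α = (c * (lam ^ α * G)) ^ (α+p) * (c * G) ^ (-p) := by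
  rw [Real.mul_rpow hc.le (by positivity), Real.mul_rpow hc.le (by positivity),
    Real.mul_rpow hc.le hG.le, Real.mul_rpow (by positivity) hG.le,
    Real.mul_rpow (by positivity) hG.le, ← Real.rpow_mul hlam.le, ← Real.rpow_mul hlam.le]
  calc c ^ α * (lam ^ ((α+p)*α) * G ^ α)
      = (c ^ (α+p) * c ^ (-p)) * (lam ^ ((α+p)*α) * (G ^ (α+p) * G ^ (-p))) := by
        rw [rpow_cancel_aux hc, rpow_cancel_aux hG]
    _ = c ^ (α+p) * (lam ^ (α*(α+p)) * G ^ (α+p)) * (c ^ (-p) * G ^ (-p)) := by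
        rw [mul_comm (α+p) α]; ring

/-- `L_p`-Minkowski inequality for mixed chord integrals:
`B_{-p,i}(K,L)^{n-i} ≥ B_i(K)^{n-i+p} B_i(L)^{-p}`, with equality iff `K` and `L`
have similar chord. -/
theorem lpMixedChordIntegral_minkowski {n i : ℕ} (hi : i < n) {p : ℝ} (hp : 1 ≤ p)
    (K L : StarBody n) :
    lpMixedChordIntegral n i p K L ^ ((n : ℝ) - i) ≥
      chordIntegral n i K ^ ((n : ℝ) - i + p) * chordIntegral n i L ^ (-p) ∧
    (lpMixedChordIntegral n i p K L ^ ((n : ℝ) - i) =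
        chordIntegral n i K ^ ((n : ℝ) - i + p) * chordIntegral n i L ^ (-p) ↔
      SimilarChord K L) := by
  have hn : n ≠ 0 := Nat.ne_zero_of_lt hi
  have hnR : (0:ℝ) < n := by exact_mod_cast Nat.pos_of_ne_zero hn
  have hc : (0:ℝ) < 1 / n := by positivity
  have hp0 : 0 < p := lt_of_lt_of_le one_pos hp
  simp only [lpMixedChordIntegral, chordIntegral]
  set α := (n:ℝ) - i with hαdef
  have hα : 0 < α := sub_pos.mpr (by exact_mod_cast hi)
  set s := (α + p) / α with hsdef
  have hs1 : 1 < s := by rw [hsdef, lt_div_iff₀ hα, one_mul]; linarith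
  have hfpos := K.chord_pos
  have hgpos := L.chord_pos
  have hfc := K.chord_continuous
  have hgc := L.chord_continuous
  set A := ∫ u, K.chord u ^ α ∂(sphereMeasure n) with hAdef
  set G := ∫ u, L.chord u ^ α ∂(sphereMeasure n) with hGdef
  set M := ∫ u, K.chord u ^ (α + p) * L.chord u ^ (-p) ∂(sphereMeasure n) with hMdef
  have hcontA : Continuous fun u => K.chord u ^ α :=
    hfc.rpow_const fun u => Or.inl (hfpos u).ne'
  have hcontG : Continuous fun u => L.chord u ^ α :=
    hgc.rpow_const fun u => Or.inl (hgpos u).ne'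
  have hcontM : Continuous fun u => K.chord u ^ (α + p) * L.chord u ^ (-p) :=
    (hfc.rpow_const fun u => Or.inl (hfpos u).ne').mul
      (hgc.rpow_const fun u => Or.inl (hgpos u).ne')
  have hA : 0 < A := integral_sphere_pos hn hcontA
    fun u => Real.rpow_pos_of_pos (hfpos u) _
  have hG : 0 < G := integral_sphere_pos hn hcontG
    fun u => Real.rpow_pos_of_pos (hgpos u) _
  have hM : 0 < M := integral_sphere_pos hn hcontM
    fun u => mul_pos (Real.rpow_pos_of_pos (hfpos u) _) (Real.rpow_pos_of_pos (hgpos u) _)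
  -- weighted measure
  set w : sphere (0 : EuclideanSpace ℝ (Fin n)) 1 → ℝ≥0 :=
    fun u => (L.chord u ^ α).toNNReal with hwdef
  have hw_meas : Measurable w := (continuous_real_toNNReal.comp hcontG).measurable
  have hw_coe : ∀ u, (w u : ℝ) = L.chord u ^ α :=
    fun u => Real.coe_toNNReal _ (Real.rpow_pos_of_pos (hgpos u) _).le
  set ν := (sphereMeasure n).withDensity (fun u => (w u : ℝ≥0∞)) with hνdef
  set h : sphere (0 : EuclideanSpace ℝ (Fin n)) 1 → ℝ :=
    fun u => (K.chord u / L.chord u) ^ α with hhdef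
  have hhc : Continuous h :=
    (hfc.div hgc fun u => (hgpos u).ne').rpow_const fun u => Or.inr hα.le
  have hhs : ∀ u, h u ^ s = (K.chord u / L.chord u) ^ (α + p) := by
    intro u
    rw [hhdef, ← Real.rpow_mul (div_nonneg (hfpos u).le (hgpos u).le)]
    congr 1
    rw [hsdef]; field_simp
  have hν_univ : ν univ = ENNReal.ofReal G := by
    rw [hνdef, withDensity_apply _ MeasurableSet.univ, Measure.restrict_univ]
    have hco : ∀ a, ((w a : ℝ≥0) : ℝ≥0∞) = ENNReal.ofReal (L.chord a ^ α) := fun a => rfl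
    simp only [hco]
    rw [← ofReal_integral_eq_lintegral_ofReal (integrable_sphere hcontG _)
        (Eventually.of_forall fun u => (Real.rpow_pos_of_pos (hgpos u) _).le)]
  haveI : IsFiniteMeasure ν := ⟨by rw [hν_univ]; exact ENNReal.ofReal_lt_top⟩
  haveI : NeZero ν := ⟨Measure.measure_univ_ne_zero.mp
    (by rw [hν_univ]; exact (ENNReal.ofReal_pos.mpr hG).ne')⟩
  have hint1 : ∫ u, h u ∂ν = A := by
    rw [hνdef, integral_withDensity_eq_integral_smul hw_meas, hAdef]
    apply integral_congr_ae
    apply Eventually.of_forall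
    intro u
    show w u • h u = K.chord u ^ α
    rw [NNReal.smul_def, hw_coe]
    show L.chord u ^ α * (K.chord u / L.chord u) ^ α = K.chord u ^ α
    rw [Real.div_rpow (hfpos u).le (hgpos u).le, mul_div_assoc']
    exact mul_div_cancel_left₀ _ (Real.rpow_pos_of_pos (hgpos u) α).ne'
  have hint2 : ∫ u, h u ^ s ∂ν = M := by
    rw [hνdef, integral_withDensity_eq_integral_smul hw_meas, hMdef]
    apply integral_congr_ae
    apply Eventually.of_forall
    intro u
    show w u • h u ^ s = K.chord u ^ (α + p) * L.chord u ^ (-p)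
    rw [NNReal.smul_def, hw_coe, hhs u, Real.div_rpow (hfpos u).le (hgpos u).le]
    have e1 : L.chord u ^ (-p) = L.chord u ^ α / L.chord u ^ (α + p) := by
      rw [← Real.rpow_sub (hgpos u)]
      congr 1; ring
    rw [e1, mul_div_assoc']
    rw [div_eq_mul_inv, div_eq_mul_inv, smul_eq_mul]
    ring
  have havg1 : ⨍ u, h u ∂ν = A / G := by
    rw [average_eq, hint1, measureReal_def, hν_univ, ENNReal.toReal_ofReal hG.le, smul_eq_mul, inv_mul_eq_div]
  have havg2 : ⨍ u, h u ^ s ∂ν = M / G := by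
    rw [average_eq, hint2, measureReal_def, hν_univ, ENNReal.toReal_ofReal hG.le, smul_eq_mul, inv_mul_eq_div]
  have hconts : Continuous fun x : ℝ => x ^ s :=
    continuous_id.rpow_const fun x => Or.inr (by linarith)
  have jen := (strictConvexOn_rpow hs1).ae_eq_const_or_map_average_lt hconts.continuousOn
    isClosed_Ici
    (Eventually.of_forall fun u =>
      Real.rpow_nonneg (div_nonneg (hfpos u).le (hgpos u).le) _)
    (integrable_sphere hhc ν) (integrable_sphere (hconts.comp hhc) ν)
  rw [havg1] at jen
  have jen2 : h =ᵐ[ν] Function.const _ (A / G) ∨ (A / G) ^ s < M / G := by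
    rcases jen with hl | hr
    · exact Or.inl hl
    · right
      rwa [havg2] at hr
  have D : SimilarChord K L ∨ A ^ (α + p) < M ^ α * G ^ p := by
    rcases jen2 with hconst | hlt
    · left
      have hμae : ∀ᵐ u ∂(sphereMeasure n), h u = A / G := by
        have h1 := (ae_withDensity_iff hw_meas.coe_nnreal_ennreal).mp hconst
        exact h1.mono fun u hu => hu (by
          rw [Ne, ENNReal.coe_eq_zero, hwdef]
          exact (Real.toNNReal_pos.mpr (Real.rpow_pos_of_pos (hgpos u) _)).ne')
      haveI := sphereMeasure_isOpenPos n
      have heq : h = fun _ => A / G :=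
        (Continuous.ae_eq_iff_eq (sphereMeasure n) hhc continuous_const).mp hμae
      have hcpos : 0 < A / G := div_pos hA hG
      refine ⟨(A / G) ^ α⁻¹, Real.rpow_pos_of_pos hcpos _, fun u => ?_⟩
      have hx : (K.chord u / L.chord u) ^ α = A / G := congrFun heq u
      have hdiv : K.chord u / L.chord u = (A / G) ^ α⁻¹ := by
        have hxpos : 0 < K.chord u / L.chord u := div_pos (hfpos u) (hgpos u)
        calc K.chord u / L.chord u
            = ((K.chord u / L.chord u) ^ α) ^ α⁻¹ := by
              rw [← Real.rpow_mul hxpos.le, mul_inv_cancel₀ hα.ne', Real.rpow_one]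
          _ = (A / G) ^ α⁻¹ := by rw [hx]
      rw [← hdiv]
      exact (div_mul_cancel₀ _ (hgpos u).ne').symm
    · right
      have h3 : ((A / G) ^ s) ^ α < (M / G) ^ α :=
        Real.rpow_lt_rpow (Real.rpow_nonneg (div_nonneg hA.le hG.le) _) hlt hα
      rw [← Real.rpow_mul (div_nonneg hA.le hG.le)] at h3
      have hsα : s * α = α + p := by rw [hsdef]; field_simp
      rw [hsα, Real.div_rpow hA.le hG.le, Real.div_rpow hM.le hG.le,
        div_lt_div_iff₀ (by positivity) (by positivity)] at h3
      have e2 : G ^ (α + p) = G ^ p * G ^ α := by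
        rw [add_comm α p, Real.rpow_add hG]
      rw [e2, ← mul_assoc] at h3
      exact lt_of_mul_lt_mul_right h3 (by positivity)
  have E : SimilarChord K L →
      (1 / (n:ℝ) * M) ^ α = (1 / (n:ℝ) * A) ^ (α + p) * (1 / (n:ℝ) * G) ^ (-p) := by
    rintro ⟨lam, hlam, hKL⟩
    have hAeq : A = lam ^ α * G := by
      rw [hAdef, hGdef, ← integral_const_mul]
      apply integral_congr_ae
      apply Eventually.of_forall
      intro u
      show K.chord u ^ α = lam ^ α * L.chord u ^ α
      rw [hKL u, Real.mul_rpow hlam.le (hgpos u).le]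
    have hMeq : M = lam ^ (α + p) * G := by
      rw [hMdef, hGdef, ← integral_const_mul]
      apply integral_congr_ae
      apply Eventually.of_forall
      intro u
      show K.chord u ^ (α + p) * L.chord u ^ (-p) = lam ^ (α + p) * L.chord u ^ α
      rw [hKL u, Real.mul_rpow hlam.le (hgpos u).le, mul_assoc,
        rpow_cancel_aux (hgpos u)]
    rw [hAeq, hMeq]
    exact alg_eq α p hc hlam hG
  have lhs_eq : (1 / (n:ℝ) * M) ^ α = (1 / (n:ℝ)) ^ α * M ^ α := Real.mul_rpow hc.le hM.le
  have rhs_eq := red_eq α p hc hA hG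
  have Sstrict : A ^ (α + p) < M ^ α * G ^ p →
      (1 / (n:ℝ) * A) ^ (α + p) * (1 / (n:ℝ) * G) ^ (-p) < (1 / (n:ℝ) * M) ^ α := by
    intro hlt
    rw [lhs_eq, rhs_eq]
    apply mul_lt_mul_of_pos_left _ (Real.rpow_pos_of_pos hc α)
    rw [Real.rpow_neg hG.le, ← div_eq_mul_inv, div_lt_iff₀ (Real.rpow_pos_of_pos hG p)]
    exact hlt
  constructor
  · rcases D with hsim | hlt
    · exact ge_of_eq (E hsim)
    · exact le_of_lt (Sstrict hlt)
  · constructor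
    · intro heq
      rcases D with hsim | hlt
      · exact hsim
      · exact absurd heq (Sstrict hlt).ne'
    · exact E
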